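/- Let r(x,y) = (B1·xy + B2·x + B3·y + B4)/(B5·xy + B6·x + B7·y + B8) be a rational function with ∂r/∂x ≠ 0 and ∂r/∂y ≠ 0 (as rational functions). Then there exist Möbius transformations x ↦ (ax+b)/(cx+d), y ↦ (a'y+b')/(c'y+d') transforming r into one of the three canonical forms: r1(x,y) = (A1x+A2y)/(A3x+A4y) with A1A4 ≠ A2A3, r2(x,y) = 1/(x+y) + A, or r3(x,y) = x + y. -/

import Mathlib

/-- The rational function `r(x,y) = (B1·xy + B2·x + B3·y + B4)/(B5·xy + B6·x + B7·y + B8)`. -/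
noncomputable def rq (B1 B2 B3 B4 B5 B6 B7 B8 x y : ℂ) : ℂ :=
  (B1 * x * y + B2 * x + B3 * y + B4) / (B5 * x * y + B6 * x + B7 * y + B8)

/-- The denominator `B5·xy + B6·x + B7·y + B8`. -/
noncomputable def denq (B5 B6 B7 B8 x y : ℂ) : ℂ :=
  B5 * x * y + B6 * x + B7 * y + B8

/-- A Möbius transformation `x ↦ (ax+b)/(cx+d)`. -/
noncomputable def mobius (a b c d x : ℂ) : ℂ := (a * x + b) / (c * x + d)


private lemma exists_sqrt (z : ℂ) : ∃ s : ℂ, s ^ 2 = z :=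
  IsAlgClosed.exists_pow_nat_eq z (by norm_num)

private lemma factor_bilinear (p q r s : ℂ) (hdet : p * s = q * r)
    (hne : ¬(p = 0 ∧ q = 0 ∧ r = 0 ∧ s = 0)) :
    ∃ u1 u2 v1 v2 : ℂ, (u1 ≠ 0 ∨ u2 ≠ 0) ∧ (v1 ≠ 0 ∨ v2 ≠ 0) ∧
      p = u1 * v1 ∧ q = u1 * v2 ∧ r = u2 * v1 ∧ s = u2 * v2 := by
  by_cases hp : p = 0
  · by_cases hq : q = 0
    · refine ⟨0, 1, r, s, Or.inr one_ne_zero, ?_, by rw [hp]; ring, by rw [hq]; ring,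
        by ring, by ring⟩
      by_contra h
      push_neg at h
      rcases h with ⟨hr, hs⟩
      exact hne ⟨hp, hq, hr, hs⟩
    · have hr : r = 0 := by
        have : q * r = 0 := by rw [← hdet, hp]; ring
        rcases mul_eq_zero.mp this with h | h
        · exact absurd h hq
        · exact h
      exact ⟨q, s, 0, 1, Or.inl hq, Or.inr one_ne_zero, by rw [hp]; ring, by ring,
        by rw [hr]; ring, by ring⟩
  · refine ⟨p, r, 1, q / p, Or.inl hp, Or.inl one_ne_zero, by ring, ?_, by ring, ?_⟩
    · field_simp
    · field_simp
      linear_combination hdet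

private lemma prop_of_det (u1 u2 u3 u4 : ℂ) (h : u1 * u4 = u2 * u3)
    (h0 : u1 ≠ 0 ∨ u2 ≠ 0) : ∃ t : ℂ, u3 = t * u1 ∧ u4 = t * u2 := by
  rcases h0 with h1 | h2
  · refine ⟨u3 / u1, by field_simp, ?_⟩
    field_simp
    linear_combination h
  · refine ⟨u4 / u2, ?_, by field_simp⟩
    field_simp
    linear_combination -h

private lemma split_rank (u1 u2 v1 v2 B5 B6 B7 B8 : ℂ)
    (hu : u1 ≠ 0 ∨ u2 ≠ 0) (hv : v1 ≠ 0 ∨ v2 ≠ 0)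
    (hs : u2 * v2 * B5 - u2 * v1 * B6 - u1 * v2 * B7 + u1 * v1 * B8 = 0) :
    ∃ f1 f2 g1 g2 : ℂ, B5 = u1 * g1 + f1 * v1 ∧ B6 = u1 * g2 + f1 * v2 ∧
      B7 = u2 * g1 + f2 * v1 ∧ B8 = u2 * g2 + f2 * v2 := by
  rcases hv with hv1 | hv2
  · rcases hu with hu1 | hu2
    · refine ⟨B5 / v1, B7 / v1, 0, (B6 - B5 * v2 / v1) / u1, ?_, ?_, ?_, ?_⟩
      · field_simp; ring
      · field_simp; ring
      · field_simp; ring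
      · field_simp; linear_combination hs
    · refine ⟨B5 / v1, B7 / v1, 0, (B8 - B7 * v2 / v1) / u2, ?_, ?_, ?_, ?_⟩
      · field_simp; ring
      · field_simp; linear_combination -hs
      · field_simp; ring
      · field_simp; ring
  · rcases hu with hu1 | hu2
    · refine ⟨B6 / v2, B8 / v2, (B5 - B6 * v1 / v2) / u1, 0, ?_, ?_, ?_, ?_⟩
      · field_simp; ring
      · field_simp; ring
      · field_simp; linear_combination -hs
      · field_simp; ring
    · refine ⟨B6 / v2, B8 / v2, (B7 - B8 * v1 / v2) / u2, 0, ?_, ?_, ?_, ?_⟩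
      · field_simp; linear_combination hs
      · field_simp; ring
      · field_simp; ring
      · field_simp; ring


private noncomputable def numq (C1 C2 C3 C4 a b c d a' b' c' d' x y : ℂ) : ℂ :=
  C1 * ((a * x + b) * (a' * y + b')) + C2 * ((a * x + b) * (c' * y + d'))
    + C3 * ((c * x + d) * (a' * y + b')) + C4 * ((c * x + d) * (c' * y + d'))

private lemma key (B1 B2 B3 B4 B5 B6 B7 B8 a b c d a' b' c' d' x y : ℂ)
    (h1 : c * x + d ≠ 0) (h2 : c' * y + d' ≠ 0)
    (h3 : denq B5 B6 B7 B8 (mobius a b c d x) (mobius a' b' c' d' y) ≠ 0) :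
    numq B5 B6 B7 B8 a b c d a' b' c' d' x y ≠ 0 ∧
    rq B1 B2 B3 B4 B5 B6 B7 B8 (mobius a b c d x) (mobius a' b' c' d' y)
      = numq B1 B2 B3 B4 a b c d a' b' c' d' x y
        / numq B5 B6 B7 B8 a b c d a' b' c' d' x y := by
  have hden : denq B5 B6 B7 B8 (mobius a b c d x) (mobius a' b' c' d' y)
      * ((c * x + d) * (c' * y + d')) = numq B5 B6 B7 B8 a b c d a' b' c' d' x y := by
    have hX : mobius a b c d x * (c * x + d) = a * x + b := div_mul_cancel₀ _ h1
    have hY : mobius a' b' c' d' y * (c' * y + d') = a' * y + b' := div_mul_cancel₀ _ h2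
    unfold denq numq
    linear_combination (B5 * mobius a' b' c' d' y * (c' * y + d') + B6 * (c' * y + d')) * hX
      + (B5 * (a * x + b) + B7 * (c * x + d)) * hY
  have hDEN : numq B5 B6 B7 B8 a b c d a' b' c' d' x y ≠ 0 := by
    rw [← hden]; exact mul_ne_zero h3 (mul_ne_zero h1 h2)
  refine ⟨hDEN, ?_⟩
  unfold denq at h3
  unfold rq
  rw [div_eq_div_iff h3 hDEN]
  have hX : mobius a b c d x * (c * x + d) = a * x + b := div_mul_cancel₀ _ h1
  have hY : mobius a' b' c' d' y * (c' * y + d') = a' * y + b' := div_mul_cancel₀ _ h2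
  unfold denq at hden
  unfold numq at hden ⊢
  linear_combination
    -(B1 * mobius a b c d x * mobius a' b' c' d' y + B2 * mobius a b c d x
      + B3 * mobius a' b' c' d' y + B4) * hden
    + (B5 * mobius a b c d x * mobius a' b' c' d' y + B6 * mobius a b c d x
      + B7 * mobius a' b' c' d' y + B8)
      * ((B1 * mobius a' b' c' d' y * (c' * y + d') + B2 * (c' * y + d')) * hX
        + (B1 * (a * x + b) + B3 * (c * x + d)) * hY)

private lemma const_in_x (B1 B2 B3 B4 B5 B6 B7 B8 L1 L2 G1 G2 H1 H2 : ℂ)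
    (e1 : B1 = L1 * G1) (e2 : B2 = L1 * G2) (e3 : B3 = L2 * G1) (e4 : B4 = L2 * G2)
    (e5 : B5 = L1 * H1) (e6 : B6 = L1 * H2) (e7 : B7 = L2 * H1) (e8 : B8 = L2 * H2)
    (hx : ∃ x₁ x₂ y : ℂ, denq B5 B6 B7 B8 x₁ y ≠ 0 ∧ denq B5 B6 B7 B8 x₂ y ≠ 0 ∧
      rq B1 B2 B3 B4 B5 B6 B7 B8 x₁ y ≠ rq B1 B2 B3 B4 B5 B6 B7 B8 x₂ y) : False := by
  obtain ⟨x1, x2, y, h1, h2, hne⟩ := hx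
  apply hne
  have hval : ∀ x : ℂ, denq B5 B6 B7 B8 x y ≠ 0 →
      rq B1 B2 B3 B4 B5 B6 B7 B8 x y = (G1 * y + G2) / (H1 * y + H2) := by
    intro x h0
    have hd : denq B5 B6 B7 B8 x y = (L1 * x + L2) * (H1 * y + H2) := by
      unfold denq; rw [e5, e6, e7, e8]; ring
    have hn : B1 * x * y + B2 * x + B3 * y + B4 = (L1 * x + L2) * (G1 * y + G2) := by
      rw [e1, e2, e3, e4]; ring
    have hL : L1 * x + L2 ≠ 0 := by
      intro h
      apply h0
      rw [hd, h, zero_mul]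
    unfold rq
    rw [show B5 * x * y + B6 * x + B7 * y + B8 = denq B5 B6 B7 B8 x y from rfl, hn, hd,
      mul_div_mul_left _ _ hL]
  rw [hval x1 h1, hval x2 h2]

private lemma const_in_y (B1 B2 B3 B4 B5 B6 B7 B8 L1 L2 G1 G2 H1 H2 : ℂ)
    (e1 : B1 = G1 * L1) (e2 : B2 = G1 * L2) (e3 : B3 = G2 * L1) (e4 : B4 = G2 * L2)
    (e5 : B5 = H1 * L1) (e6 : B6 = H1 * L2) (e7 : B7 = H2 * L1) (e8 : B8 = H2 * L2)
    (hy : ∃ x y₁ y₂ : ℂ, denq B5 B6 B7 B8 x y₁ ≠ 0 ∧ denq B5 B6 B7 B8 x y₂ ≠ 0 ∧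
      rq B1 B2 B3 B4 B5 B6 B7 B8 x y₁ ≠ rq B1 B2 B3 B4 B5 B6 B7 B8 x y₂) : False := by
  obtain ⟨x, y1, y2, h1, h2, hne⟩ := hy
  apply hne
  have hval : ∀ y : ℂ, denq B5 B6 B7 B8 x y ≠ 0 →
      rq B1 B2 B3 B4 B5 B6 B7 B8 x y = (G1 * x + G2) / (H1 * x + H2) := by
    intro y h0
    have hd : denq B5 B6 B7 B8 x y = (H1 * x + H2) * (L1 * y + L2) := by
      unfold denq; rw [e5, e6, e7, e8]; ring
    have hn : B1 * x * y + B2 * x + B3 * y + B4 = (G1 * x + G2) * (L1 * y + L2) := by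
      rw [e1, e2, e3, e4]; ring
    have hL : L1 * y + L2 ≠ 0 := by
      intro h
      apply h0
      rw [hd, h, mul_zero]
    unfold rq
    rw [show B5 * x * y + B6 * x + B7 * y + B8 = denq B5 B6 B7 B8 x y from rfl, hn, hd,
      mul_div_mul_right _ _ hL]
  rw [hval y1 h1, hval y2 h2]

private lemma const_val (B1 B2 B3 B4 B5 B6 B7 B8 w : ℂ)
    (e1 : B1 = w * B5) (e2 : B2 = w * B6) (e3 : B3 = w * B7) (e4 : B4 = w * B8)
    (hx : ∃ x₁ x₂ y : ℂ, denq B5 B6 B7 B8 x₁ y ≠ 0 ∧ denq B5 B6 B7 B8 x₂ y ≠ 0 ∧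
      rq B1 B2 B3 B4 B5 B6 B7 B8 x₁ y ≠ rq B1 B2 B3 B4 B5 B6 B7 B8 x₂ y) : False := by
  obtain ⟨x1, x2, y, h1, h2, hne⟩ := hx
  apply hne
  have hval : ∀ x : ℂ, denq B5 B6 B7 B8 x y ≠ 0 →
      rq B1 B2 B3 B4 B5 B6 B7 B8 x y = w := by
    intro x h0
    unfold denq at h0
    unfold rq
    rw [show B1 * x * y + B2 * x + B3 * y + B4
        = w * (B5 * x * y + B6 * x + B7 * y + B8) by rw [e1, e2, e3, e4]; ring,
      mul_div_assoc, div_self h0, mul_one]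
  rw [hval x1 h1, hval x2 h2]

/-- Classification of the rational functions `r(x,y)` (nonconstant in each variable)
into the three canonical forms `r1`, `r2`, `r3` under Möbius transformations of `x` and `y`. -/
theorem stmt12 (B1 B2 B3 B4 B5 B6 B7 B8 : ℂ)
    (hx : ∃ x₁ x₂ y : ℂ, denq B5 B6 B7 B8 x₁ y ≠ 0 ∧ denq B5 B6 B7 B8 x₂ y ≠ 0 ∧
      rq B1 B2 B3 B4 B5 B6 B7 B8 x₁ y ≠ rq B1 B2 B3 B4 B5 B6 B7 B8 x₂ y)
    (hy : ∃ x y₁ y₂ : ℂ, denq B5 B6 B7 B8 x y₁ ≠ 0 ∧ denq B5 B6 B7 B8 x y₂ ≠ 0 ∧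
      rq B1 B2 B3 B4 B5 B6 B7 B8 x y₁ ≠ rq B1 B2 B3 B4 B5 B6 B7 B8 x y₂) :
    ∃ a b c d a' b' c' d' : ℂ, a * d - b * c ≠ 0 ∧ a' * d' - b' * c' ≠ 0 ∧
      ((∃ A1 A2 A3 A4 : ℂ, A1 * A4 ≠ A2 * A3 ∧
          ∀ x y : ℂ, c * x + d ≠ 0 → c' * y + d' ≠ 0 →
            denq B5 B6 B7 B8 (mobius a b c d x) (mobius a' b' c' d' y) ≠ 0 →
            A3 * x + A4 * y ≠ 0 →
            rq B1 B2 B3 B4 B5 B6 B7 B8 (mobius a b c d x) (mobius a' b' c' d' y)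
              = (A1 * x + A2 * y) / (A3 * x + A4 * y)) ∨
       (∃ A : ℂ,
          ∀ x y : ℂ, c * x + d ≠ 0 → c' * y + d' ≠ 0 →
            denq B5 B6 B7 B8 (mobius a b c d x) (mobius a' b' c' d' y) ≠ 0 →
            x + y ≠ 0 →
            rq B1 B2 B3 B4 B5 B6 B7 B8 (mobius a b c d x) (mobius a' b' c' d' y)
              = 1 / (x + y) + A) ∨
       (∀ x y : ℂ, c * x + d ≠ 0 → c' * y + d' ≠ 0 →
            denq B5 B6 B7 B8 (mobius a b c d x) (mobius a' b' c' d' y) ≠ 0 →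
            rq B1 B2 B3 B4 B5 B6 B7 B8 (mobius a b c d x) (mobius a' b' c' d' y)
              = x + y)) := by
  
  have hD0 : ¬(B5 = 0 ∧ B6 = 0 ∧ B7 = 0 ∧ B8 = 0) := by
    rintro ⟨h5, h6, h7, h8⟩
    obtain ⟨x1, x2, y, h1, -, -⟩ := hx
    apply h1
    unfold denq
    rw [h5, h6, h7, h8]; ring
  by_cases hγ : B5 * B8 - B6 * B7 = 0
  · -- γ = 0 : the denominator factors
    obtain ⟨u3, u4, v3, v4, hu2, hv2, f5, f6, f7, f8⟩ :=
      factor_bilinear B5 B6 B7 B8 (by linear_combination hγ) hD0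
    by_cases hβ : B1 * B8 + B4 * B5 - B2 * B7 - B3 * B6 = 0
    · by_cases hα : B1 * B4 - B2 * B3 = 0
      · -- C3 : contradiction
        exfalso
        by_cases hN0 : B1 = 0 ∧ B2 = 0 ∧ B3 = 0 ∧ B4 = 0
        · exact const_val B1 B2 B3 B4 B5 B6 B7 B8 0 (by rw [hN0.1]; ring)
            (by rw [hN0.2.1]; ring) (by rw [hN0.2.2.1]; ring) (by rw [hN0.2.2.2]; ring) hx
        · obtain ⟨u1, u2, v1, v2, hu1, hv1, f1, f2, f3, f4⟩ :=
            factor_bilinear B1 B2 B3 B4 (by linear_combination hα) hN0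
          have hfac : (u1 * u4 - u2 * u3) * (v1 * v4 - v2 * v3) = 0 := by
            rw [f1, f2, f3, f4, f5, f6, f7, f8] at hβ
            linear_combination hβ
          rcases mul_eq_zero.mp hfac with h | h
          · obtain ⟨t, ht3, ht4⟩ := prop_of_det u1 u2 u3 u4 (by linear_combination h) hu1
            exact const_in_x B1 B2 B3 B4 B5 B6 B7 B8 u1 u2 v1 v2 (t * v3) (t * v4)
              f1 f2 f3 f4 (by rw [f5, ht3]; ring) (by rw [f6, ht3]; ring)
              (by rw [f7, ht4]; ring) (by rw [f8, ht4]; ring) hx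
          · obtain ⟨t, ht3, ht4⟩ := prop_of_det v1 v2 v3 v4 (by linear_combination h) hv1
            exact const_in_y B1 B2 B3 B4 B5 B6 B7 B8 v1 v2 u1 u2 (t * u3) (t * u4)
              f1 f2 f3 f4 (by rw [f5, ht3]; ring) (by rw [f6, ht4]; ring)
              (by rw [f7, ht3]; ring) (by rw [f8, ht4]; ring) hy
      · -- C2 : canonical form x + y
        have hs : u4 * v4 * B1 - u4 * v3 * B2 - u3 * v4 * B3 + u3 * v3 * B4 = 0 := by
          rw [← f5, ← f6, ← f7, ← f8]
          linear_combination hβ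
        obtain ⟨f1, f2, g1, g2, e1, e2, e3, e4⟩ :=
          split_rank u3 u4 v3 v4 B1 B2 B3 B4 hu2 hv2 hs
        have hαfac : B1 * B4 - B2 * B3 = (u3 * f2 - u4 * f1) * (g1 * v4 - g2 * v3) := by
          rw [e1, e2, e3, e4]; ring
        have hΔx : u3 * f2 - u4 * f1 ≠ 0 := fun h => hα (by rw [hαfac, h, zero_mul])
        have hΔy : g1 * v4 - g2 * v3 ≠ 0 := fun h => hα (by rw [hαfac, h, mul_zero])
        refine ⟨u4, -f2, -u3, f1, v4, -g2, -v3, g1, ?_, ?_, Or.inr (Or.inr ?_)⟩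
        · intro h; apply hΔx; linear_combination -h
        · intro h; apply hΔy; linear_combination h
        · intro x y h1 h2 h3
          obtain ⟨hDEN, heq⟩ :=
            key B1 B2 B3 B4 B5 B6 B7 B8 u4 (-f2) (-u3) f1 v4 (-g2) (-v3) g1 x y h1 h2 h3
          rw [heq, div_eq_iff hDEN]
          unfold numq
          rw [e1, e2, e3, e4, f5, f6, f7, f8]
          ring
    · -- C1 : one finite root, one root at infinity
      obtain ⟨w1, hw1def⟩ : ∃ w : ℂ,
          w = (B1 * B4 - B2 * B3) / (B1 * B8 + B4 * B5 - B2 * B7 - B3 * B6) := ⟨_, rfl⟩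
      have hw1 : w1 * (B1 * B8 + B4 * B5 - B2 * B7 - B3 * B6) = B1 * B4 - B2 * B3 := by
        rw [hw1def]; exact div_mul_cancel₀ _ hβ
      have hFdet : (B1 - w1 * B5) * (B4 - w1 * B8) = (B2 - w1 * B6) * (B3 - w1 * B7) := by
        linear_combination w1 ^ 2 * hγ - hw1
      have hFne : ¬(B1 - w1 * B5 = 0 ∧ B2 - w1 * B6 = 0 ∧ B3 - w1 * B7 = 0 ∧
          B4 - w1 * B8 = 0) := by
        rintro ⟨k1, k2, k3, k4⟩
        exact const_val B1 B2 B3 B4 B5 B6 B7 B8 w1 (by linear_combination k1)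
          (by linear_combination k2) (by linear_combination k3) (by linear_combination k4) hx
      obtain ⟨u1, u2, v1, v2, hu1, hv1, p1, p2, p3, p4⟩ :=
        factor_bilinear _ _ _ _ hFdet hFne
      have hΔx : u1 * u4 - u2 * u3 ≠ 0 := by
        intro h
        obtain ⟨t, ht3, ht4⟩ := prop_of_det u1 u2 u3 u4 (by linear_combination h) hu1
        exact const_in_x B1 B2 B3 B4 B5 B6 B7 B8 u1 u2
          (v1 + w1 * (t * v3)) (v2 + w1 * (t * v4)) (t * v3) (t * v4)
          (by linear_combination p1 + w1 * f5 + w1 * v3 * ht3)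
          (by linear_combination p2 + w1 * f6 + w1 * v4 * ht3)
          (by linear_combination p3 + w1 * f7 + w1 * v3 * ht4)
          (by linear_combination p4 + w1 * f8 + w1 * v4 * ht4)
          (by linear_combination f5 + v3 * ht3) (by linear_combination f6 + v4 * ht3)
          (by linear_combination f7 + v3 * ht4) (by linear_combination f8 + v4 * ht4) hx
      have hΔy : v2 * v3 - v1 * v4 ≠ 0 := by
        intro h
        obtain ⟨t, ht3, ht4⟩ := prop_of_det v1 v2 v3 v4 (by linear_combination -h) hv1
        exact const_in_y B1 B2 B3 B4 B5 B6 B7 B8 v1 v2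
          (u1 + w1 * (t * u3)) (u2 + w1 * (t * u4)) (t * u3) (t * u4)
          (by linear_combination p1 + w1 * f5 + w1 * u3 * ht3)
          (by linear_combination p2 + w1 * f6 + w1 * u3 * ht4)
          (by linear_combination p3 + w1 * f7 + w1 * u4 * ht3)
          (by linear_combination p4 + w1 * f8 + w1 * u4 * ht4)
          (by linear_combination f5 + u3 * ht3) (by linear_combination f6 + u3 * ht4)
          (by linear_combination f7 + u4 * ht3) (by linear_combination f8 + u4 * ht4) hy
      have hB1 : B1 = u1 * v1 + w1 * (u3 * v3) := by linear_combination p1 + w1 * f5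
      have hB2 : B2 = u1 * v2 + w1 * (u3 * v4) := by linear_combination p2 + w1 * f6
      have hB3 : B3 = u2 * v1 + w1 * (u4 * v3) := by linear_combination p3 + w1 * f7
      have hB4 : B4 = u2 * v2 + w1 * (u4 * v4) := by linear_combination p4 + w1 * f8
      refine ⟨u4, -u2, -u3, u1, v2, -v4, -v1, v3, ?_, ?_,
        Or.inl ⟨1, w1, 0, 1, by norm_num, ?_⟩⟩
      · intro h; apply hΔx; linear_combination h
      · intro h; apply hΔy; linear_combination h
      · intro x y h1 h2 h3 h4
        obtain ⟨hDEN, heq⟩ :=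
          key B1 B2 B3 B4 B5 B6 B7 B8 u4 (-u2) (-u3) u1 v2 (-v4) (-v1) v3 x y h1 h2 h3
        rw [heq, div_eq_div_iff hDEN h4]
        unfold numq
        rw [hB1, hB2, hB3, hB4, f5, f6, f7, f8]
        ring
  · -- γ ≠ 0
    obtain ⟨sd, hsd⟩ := exists_sqrt ((B1 * B8 + B4 * B5 - B2 * B7 - B3 * B6) ^ 2
      - 4 * (B1 * B4 - B2 * B3) * (B5 * B8 - B6 * B7))
    have h2γ : (2 : ℂ) * (B5 * B8 - B6 * B7) ≠ 0 := mul_ne_zero two_ne_zero hγ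
    by_cases hs0 : sd = 0
    · -- double (finite) root : canonical form 1/(x+y) + A
      obtain ⟨w0, hw0def⟩ : ∃ w : ℂ,
          w = (B1 * B8 + B4 * B5 - B2 * B7 - B3 * B6) / (2 * (B5 * B8 - B6 * B7)) := ⟨_, rfl⟩
      have hw0 : w0 * (2 * (B5 * B8 - B6 * B7))
          = B1 * B8 + B4 * B5 - B2 * B7 - B3 * B6 := by
        rw [hw0def]; exact div_mul_cancel₀ _ h2γ
      have hdisc : (B1 * B8 + B4 * B5 - B2 * B7 - B3 * B6) ^ 2
          - 4 * (B1 * B4 - B2 * B3) * (B5 * B8 - B6 * B7) = 0 := by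
        rw [← hsd, hs0]; ring
      have h4 : (4 * (B5 * B8 - B6 * B7)) * ((B1 - w0 * B5) * (B4 - w0 * B8)
          - (B2 - w0 * B6) * (B3 - w0 * B7)) = 0 := by
        linear_combination (w0 * (2 * (B5 * B8 - B6 * B7))
          - (B1 * B8 + B4 * B5 - B2 * B7 - B3 * B6)) * hw0 - hdisc
      have hFdet : (B1 - w0 * B5) * (B4 - w0 * B8) = (B2 - w0 * B6) * (B3 - w0 * B7) := by
        have := (mul_eq_zero.mp h4).resolve_left (by
          intro hh; apply hγ; linear_combination hh / 4)
        linear_combination this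
      have hFne : ¬(B1 - w0 * B5 = 0 ∧ B2 - w0 * B6 = 0 ∧ B3 - w0 * B7 = 0 ∧
          B4 - w0 * B8 = 0) := by
        rintro ⟨k1, k2, k3, k4⟩
        exact const_val B1 B2 B3 B4 B5 B6 B7 B8 w0 (by linear_combination k1)
          (by linear_combination k2) (by linear_combination k3) (by linear_combination k4) hx
      obtain ⟨u1, u2, v1, v2, hu1, hv1, p1, p2, p3, p4⟩ :=
        factor_bilinear _ _ _ _ hFdet hFne
      have hs : u2 * v2 * B5 - u2 * v1 * B6 - u1 * v2 * B7 + u1 * v1 * B8 = 0 := by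
        linear_combination -hw0 - B5 * p4 + B6 * p3 + B7 * p2 - B8 * p1
      obtain ⟨f1, f2, g1, g2, e5, e6, e7, e8⟩ :=
        split_rank u1 u2 v1 v2 B5 B6 B7 B8 hu1 hv1 hs
      have hγfac : B5 * B8 - B6 * B7 = (u1 * f2 - u2 * f1) * (g1 * v2 - g2 * v1) := by
        rw [e5, e6, e7, e8]; ring
      have hΔx : u1 * f2 - u2 * f1 ≠ 0 := fun h => hγ (by rw [hγfac, h, zero_mul])
      have hΔy : g1 * v2 - g2 * v1 ≠ 0 := fun h => hγ (by rw [hγfac, h, mul_zero])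
      have hB1 : B1 = w0 * (u1 * g1 + f1 * v1) + u1 * v1 := by linear_combination p1 + w0 * e5
      have hB2 : B2 = w0 * (u1 * g2 + f1 * v2) + u1 * v2 := by linear_combination p2 + w0 * e6
      have hB3 : B3 = w0 * (u2 * g1 + f2 * v1) + u2 * v1 := by linear_combination p3 + w0 * e7
      have hB4 : B4 = w0 * (u2 * g2 + f2 * v2) + u2 * v2 := by linear_combination p4 + w0 * e8
      refine ⟨u2, -f2, -u1, f1, v2, -g2, -v1, g1, ?_, ?_, Or.inr (Or.inl ⟨w0, ?_⟩)⟩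
      · intro h; apply hΔx; linear_combination -h
      · intro h; apply hΔy; linear_combination h
      · intro x y h1 h2 h3 h4
        obtain ⟨hDEN, heq⟩ :=
          key B1 B2 B3 B4 B5 B6 B7 B8 u2 (-f2) (-u1) f1 v2 (-g2) (-v1) g1 x y h1 h2 h3
        rw [heq, show (1 : ℂ) / (x + y) + w0 = (1 + w0 * (x + y)) / (x + y) by
          field_simp, div_eq_div_iff hDEN h4]
        unfold numq
        rw [hB1, hB2, hB3, hB4, e5, e6, e7, e8]
        ring
    · -- two distinct finite roots : canonical form (A1 x + A2 y)/(A3 x + A4 y)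
      obtain ⟨w1, hw1def⟩ : ∃ w : ℂ,
          w = (B1 * B8 + B4 * B5 - B2 * B7 - B3 * B6 + sd) / (2 * (B5 * B8 - B6 * B7)) := ⟨_, rfl⟩
      obtain ⟨w2, hw2def⟩ : ∃ w : ℂ,
          w = (B1 * B8 + B4 * B5 - B2 * B7 - B3 * B6 - sd) / (2 * (B5 * B8 - B6 * B7)) := ⟨_, rfl⟩
      have hw1 : w1 * (2 * (B5 * B8 - B6 * B7))
          = B1 * B8 + B4 * B5 - B2 * B7 - B3 * B6 + sd := by
        rw [hw1def]; exact div_mul_cancel₀ _ h2γ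
      have hw2 : w2 * (2 * (B5 * B8 - B6 * B7))
          = B1 * B8 + B4 * B5 - B2 * B7 - B3 * B6 - sd := by
        rw [hw2def]; exact div_mul_cancel₀ _ h2γ
      have hd : w2 - w1 ≠ 0 := by
        intro h
        apply hs0
        have h4 : sd * 2 = 0 := by
          linear_combination hw2 - hw1 - (2 * (B5 * B8 - B6 * B7)) * h
        exact (mul_eq_zero.mp h4).resolve_right two_ne_zero
      have hF1det : (B1 - w1 * B5) * (B4 - w1 * B8) = (B2 - w1 * B6) * (B3 - w1 * B7) := by
        have h4 : (4 * (B5 * B8 - B6 * B7)) * ((B1 - w1 * B5) * (B4 - w1 * B8)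
            - (B2 - w1 * B6) * (B3 - w1 * B7)) = 0 := by
          linear_combination hsd + (2 * sd + (w1 * (2 * (B5 * B8 - B6 * B7))
            - (B1 * B8 + B4 * B5 - B2 * B7 - B3 * B6 + sd))) * hw1
        have := (mul_eq_zero.mp h4).resolve_left (by
          intro hh; apply hγ; linear_combination hh / 4)
        linear_combination this
      have hF2det : (B1 - w2 * B5) * (B4 - w2 * B8) = (B2 - w2 * B6) * (B3 - w2 * B7) := by
        have h4 : (4 * (B5 * B8 - B6 * B7)) * ((B1 - w2 * B5) * (B4 - w2 * B8)
            - (B2 - w2 * B6) * (B3 - w2 * B7)) = 0 := by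
          linear_combination hsd + (-2 * sd + (w2 * (2 * (B5 * B8 - B6 * B7))
            - (B1 * B8 + B4 * B5 - B2 * B7 - B3 * B6 - sd))) * hw2
        have := (mul_eq_zero.mp h4).resolve_left (by
          intro hh; apply hγ; linear_combination hh / 4)
        linear_combination this
      have hF1ne : ¬(B1 - w1 * B5 = 0 ∧ B2 - w1 * B6 = 0 ∧ B3 - w1 * B7 = 0 ∧
          B4 - w1 * B8 = 0) := by
        rintro ⟨k1, k2, k3, k4⟩
        exact const_val B1 B2 B3 B4 B5 B6 B7 B8 w1 (by linear_combination k1)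
          (by linear_combination k2) (by linear_combination k3) (by linear_combination k4) hx
      have hF2ne : ¬(B1 - w2 * B5 = 0 ∧ B2 - w2 * B6 = 0 ∧ B3 - w2 * B7 = 0 ∧
          B4 - w2 * B8 = 0) := by
        rintro ⟨k1, k2, k3, k4⟩
        exact const_val B1 B2 B3 B4 B5 B6 B7 B8 w2 (by linear_combination k1)
          (by linear_combination k2) (by linear_combination k3) (by linear_combination k4) hx
      obtain ⟨u1, u2, v1, v2, hu1, hv1, p1, p2, p3, p4⟩ :=
        factor_bilinear _ _ _ _ hF1det hF1ne
      obtain ⟨u3, u4, v3, v4, hu2, hv2, q1, q2, q3, q4⟩ :=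
        factor_bilinear _ _ _ _ hF2det hF2ne
      have hB1 : B1 = (w2 * (u1 * v1) - w1 * (u3 * v3)) / (w2 - w1) := by
        rw [eq_div_iff hd]; linear_combination w2 * p1 - w1 * q1
      have hB2 : B2 = (w2 * (u1 * v2) - w1 * (u3 * v4)) / (w2 - w1) := by
        rw [eq_div_iff hd]; linear_combination w2 * p2 - w1 * q2
      have hB3 : B3 = (w2 * (u2 * v1) - w1 * (u4 * v3)) / (w2 - w1) := by
        rw [eq_div_iff hd]; linear_combination w2 * p3 - w1 * q3
      have hB4 : B4 = (w2 * (u2 * v2) - w1 * (u4 * v4)) / (w2 - w1) := by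
        rw [eq_div_iff hd]; linear_combination w2 * p4 - w1 * q4
      have hB5 : B5 = (u1 * v1 - u3 * v3) / (w2 - w1) := by
        rw [eq_div_iff hd]; linear_combination p1 - q1
      have hB6 : B6 = (u1 * v2 - u3 * v4) / (w2 - w1) := by
        rw [eq_div_iff hd]; linear_combination p2 - q2
      have hB7 : B7 = (u2 * v1 - u4 * v3) / (w2 - w1) := by
        rw [eq_div_iff hd]; linear_combination p3 - q3
      have hB8 : B8 = (u2 * v2 - u4 * v4) / (w2 - w1) := by
        rw [eq_div_iff hd]; linear_combination p4 - q4
      have hΔx : u1 * u4 - u2 * u3 ≠ 0 := by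
        intro h
        obtain ⟨t, ht3, ht4⟩ := prop_of_det u1 u2 u3 u4 (by linear_combination h) hu1
        exact const_in_x B1 B2 B3 B4 B5 B6 B7 B8 u1 u2
          ((w2 * v1 - w1 * (t * v3)) / (w2 - w1)) ((w2 * v2 - w1 * (t * v4)) / (w2 - w1))
          ((v1 - t * v3) / (w2 - w1)) ((v2 - t * v4) / (w2 - w1))
          (by rw [hB1, ht3]; field_simp [hd])
          (by rw [hB2, ht3]; field_simp [hd])
          (by rw [hB3, ht4]; field_simp [hd])
          (by rw [hB4, ht4]; field_simp [hd])
          (by rw [hB5, ht3]; field_simp [hd])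
          (by rw [hB6, ht3]; field_simp [hd])
          (by rw [hB7, ht4]; field_simp [hd])
          (by rw [hB8, ht4]; field_simp [hd]) hx
      have hΔy : v2 * v3 - v1 * v4 ≠ 0 := by
        intro h
        obtain ⟨t, ht3, ht4⟩ := prop_of_det v1 v2 v3 v4 (by linear_combination -h) hv1
        exact const_in_y B1 B2 B3 B4 B5 B6 B7 B8 v1 v2
          ((w2 * u1 - w1 * (t * u3)) / (w2 - w1)) ((w2 * u2 - w1 * (t * u4)) / (w2 - w1))
          ((u1 - t * u3) / (w2 - w1)) ((u2 - t * u4) / (w2 - w1))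
          (by rw [hB1, ht3]; field_simp [hd])
          (by rw [hB2, ht4]; field_simp [hd])
          (by rw [hB3, ht3]; field_simp [hd])
          (by rw [hB4, ht4]; field_simp [hd])
          (by rw [hB5, ht3]; field_simp [hd])
          (by rw [hB6, ht4]; field_simp [hd])
          (by rw [hB7, ht3]; field_simp [hd])
          (by rw [hB8, ht4]; field_simp [hd]) hy
      refine ⟨u4, -u2, -u3, u1, v2, -v4, -v1, v3, ?_, ?_,
        Or.inl ⟨w2, -w1, 1, -1, ?_, ?_⟩⟩
      · intro h; apply hΔx; linear_combination h
      · intro h; apply hΔy; linear_combination h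
      · intro h; apply hd; linear_combination -h
      · intro x y h1 h2 h3 h4
        obtain ⟨hDEN, heq⟩ :=
          key B1 B2 B3 B4 B5 B6 B7 B8 u4 (-u2) (-u3) u1 v2 (-v4) (-v1) v3 x y h1 h2 h3
        rw [heq, div_eq_div_iff hDEN h4]
        unfold numq
        rw [hB1, hB2, hB3, hB4, hB5, hB6, hB7, hB8]
        field_simp [hd]
        ring
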